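/- arXiv:2110.15329 — 2 statements merged into one kernel-verified Lean document; each statement's English description precedes it below -/
import Mathlib

section
/- Let S be a chain with n elements, so its Cartan matrix C is the n×n lower triangular matrix of all 1's on and below the diagonal. Then det(x·C + Cᵀ) = xⁿ + x^{n−1} + ⋯ + x + 1. -/
open Polynomial

noncomputable def Bmat (n : ℕ) : Matrix (Fin n) (Fin n) (Polynomial ℤ) :=
  Matrix.of fun i j => if (j : ℕ) = n - 1 then (if (i : ℕ) = n - 1 then X + 1 else 1)
    else if (i : ℕ) = (j : ℕ) then X else if (i : ℕ) = (j : ℕ) + 1 then -1 else 0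

noncomputable def Emat (n : ℕ) : Matrix (Fin n) (Fin n) (Polynomial ℤ) :=
  Matrix.of fun k j => if k = j then 1 else if (k : ℕ) = (j : ℕ) + 1 then -1 else 0

lemma detE (n : ℕ) : (Emat n).det = 1 := by
  rw [Matrix.det_of_lowerTriangular]
  · simp [Emat]
  · intro i j hij
    simp only [Emat, Matrix.of_apply]
    have h1 : i ≠ j := by exact hij.ne'
    have h2 : (i : ℕ) ≠ (j : ℕ) + 1 := by
      have : (i : ℕ) < (j : ℕ) := hij
      omega
    simp [h1, h2]

lemma detB : ∀ n : ℕ, (Bmat n).det = ∑ i ∈ Finset.range (n + 1), X ^ i := by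
  intro n
  induction n with
  | zero => simp [Matrix.det_fin_zero]
  | succ m ih =>
    match m, ih with
    | 0, _ => simp [Matrix.det_fin_one, Bmat, Finset.sum_range_succ, add_comm]
    | k + 1, ih =>
      rw [Matrix.det_succ_row_zero]
      have hz : ∀ j : Fin (k + 2), j ≠ 0 ∧ j ≠ Fin.last (k + 1) →
          (-1 : Polynomial ℤ) ^ (j : ℕ) * Bmat (k + 2) 0 j *
            ((Bmat (k + 2)).submatrix Fin.succ j.succAbove).det = 0 := by
        rintro j ⟨hj0, hjl⟩
        have h1 : (j : ℕ) ≠ k + 1 := fun h => hjl (Fin.ext h)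
        have h2 : (0 : ℕ) ≠ (j : ℕ) := fun h => hj0 (Fin.ext h.symm)
        have h3 : (0 : ℕ) ≠ (j : ℕ) + 1 := by omega
        simp [Bmat, h1, h2, h3]
      rw [Fintype.sum_eq_add 0 (Fin.last (k + 1)) (by simp [Fin.ext_iff]) hz]
      have e1 : ((Bmat (k + 2)).submatrix Fin.succ ((0 : Fin (k+2)).succAbove)) = Bmat (k + 1) := by
        ext i j
        simp only [Matrix.submatrix_apply, Bmat, Matrix.of_apply, Fin.succAbove_zero,
          Fin.val_succ]
        split_ifs <;> first | rfl | omega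
      have e2 : ((Bmat (k + 2)).submatrix Fin.succ ((Fin.last (k+1)).succAbove)).det
          = (-1) ^ (k + 1) := by
        rw [Fin.succAbove_last]
        have hupper : ((Bmat (k + 2)).submatrix Fin.succ Fin.castSucc).BlockTriangular id := by
          intro i j hij
          have hlt : (j : ℕ) < (i : ℕ) := hij
          simp only [Matrix.submatrix_apply, Bmat, Matrix.of_apply, Fin.coe_castSucc,
            Fin.val_succ]
          have h2 : (j : ℕ) ≠ k + 1 := by omega
          have h3 : (i : ℕ) + 1 ≠ (j : ℕ) := by omega
          have h4 : (i : ℕ) + 1 ≠ (j : ℕ) + 1 := by omega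
          have h5 : (i : ℕ) ≠ (j : ℕ) := by omega
          simp [h2, h3, h4, h5]
        rw [Matrix.det_of_upperTriangular hupper]
        have diag : ∀ i : Fin (k + 1),
            ((Bmat (k + 2)).submatrix Fin.succ Fin.castSucc) i i = -1 := by
          intro i
          have h2 : (i : ℕ) < k + 1 := i.isLt
          simp only [Matrix.submatrix_apply, Bmat, Matrix.of_apply, Fin.coe_castSucc,
            Fin.val_succ]
          have h3 : (i : ℕ) ≠ k + 1 := by omega
          have h4 : (i : ℕ) + 1 ≠ (i : ℕ) := by omega
          simp [h3, h4]
        rw [Finset.prod_congr rfl fun i _ => diag i, Finset.prod_const]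
        simp
      have hB00 : Bmat (k + 2) 0 0 = X := by simp [Bmat]
      have hB0l : Bmat (k + 2) 0 (Fin.last (k + 1)) = 1 := by simp [Bmat]
      rw [e1, e2, hB00, hB0l, ih]
      have hrhs : ∑ i ∈ Finset.range (k + 1 + 1 + 1), (X : Polynomial ℤ) ^ i
          = X * ∑ i ∈ Finset.range (k + 1 + 1), X ^ i + 1 := by
        rw [Finset.sum_range_succ']
        simp [Finset.mul_sum, pow_succ, mul_comm]
      rw [hrhs]
      have hone : ((-1 : Polynomial ℤ)) ^ (k + 1) * (-1) ^ (k + 1) = 1 := by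
        rw [← mul_pow]; norm_num
      simp only [Fin.val_zero, pow_zero, one_mul, Fin.val_last, mul_one]
      rw [hone]

noncomputable def Amat (n : ℕ) : Matrix (Fin n) (Fin n) (Polynomial ℤ) :=
  Matrix.of fun i j => (if j ≤ i then X else 0) + (if i ≤ j then 1 else 0)

lemma eE (n : ℕ) (k j : Fin n) :
    Emat n k j = (if k = j then 1 else 0) + (if (k : ℕ) = (j : ℕ) + 1 then -1 else 0) := by
  simp only [Emat, Matrix.of_apply, Fin.ext_iff]
  split_ifs <;> first | (exfalso; omega) | ring

lemma AE (n : ℕ) : Amat n * Emat n = Bmat n := by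
  refine Matrix.ext fun i j => ?_
  rw [Matrix.mul_apply]
  simp only [eE, mul_add, Finset.sum_add_distrib]
  rw [Finset.sum_congr rfl (fun k _ => by rw [mul_ite, mul_one, mul_zero] :
    ∀ k ∈ Finset.univ, Amat n i k * (if k = j then (1 : Polynomial ℤ) else 0)
      = if k = j then Amat n i k else 0)]
  rw [Finset.sum_ite_eq' Finset.univ j (fun k => Amat n i k)]
  by_cases h : (j : ℕ) + 1 < n
  · have hkj : ∀ k : Fin n, ((k : ℕ) = (j : ℕ) + 1) ↔ (k = (⟨(j : ℕ) + 1, h⟩ : Fin n)) := by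
      intro k; simp [Fin.ext_iff]
    simp only [hkj]
    rw [Finset.sum_congr rfl (fun k _ => by rw [mul_ite, mul_neg_one, mul_zero] :
      ∀ k ∈ Finset.univ, Amat n i k * (if k = (⟨(j : ℕ) + 1, h⟩ : Fin n) then (-1 : Polynomial ℤ) else 0)
        = if k = (⟨(j : ℕ) + 1, h⟩ : Fin n) then -(Amat n i k) else 0)]
    rw [Finset.sum_ite_eq' Finset.univ _ (fun k => -(Amat n i k))]
    have hjn : (j : ℕ) ≠ n - 1 := by omega
    have hi : (i : ℕ) < n := i.isLt
    simp only [Finset.mem_univ, if_true, Amat, Bmat, Matrix.of_apply, Fin.le_def, Fin.val_mk,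
      hjn, if_false]
    split_ifs <;> first | (exfalso; omega) | ring
  · have hz : ∀ k : Fin n, Amat n i k * (if (k : ℕ) = (j : ℕ) + 1 then (-1 : Polynomial ℤ) else 0) = 0 := by
      intro k
      have : (k : ℕ) ≠ (j : ℕ) + 1 := by have := k.isLt; omega
      simp [this]
    rw [Finset.sum_congr rfl fun k _ => hz k, Finset.sum_const_zero]
    have hjn : (j : ℕ) = n - 1 := by have := j.isLt; omega
    have hi : (i : ℕ) < n := i.isLt
    have hj : (j : ℕ) < n := j.isLt
    simp only [Finset.mem_univ, if_true, Amat, Bmat, Matrix.of_apply, Fin.le_def, hjn, if_true,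
      add_zero]
    split_ifs <;> first | (exfalso; omega) | ring

theorem stmt_8 (n : ℕ) (M : Matrix (Fin n) (Fin n) ℤ)
    (hM : ∀ i j : Fin n, M i j = if j ≤ i then 1 else 0) :
    (Matrix.of fun i j => X * C (M i j) + C (M j i)).det
      = ∑ i ∈ Finset.range (n + 1), X ^ i := by
  have hA : (Matrix.of fun i j => X * C (M i j) + C (M j i)) = Amat n := by
    refine Matrix.ext fun i j => ?_
    rw [Matrix.of_apply, hM i j, hM j i]
    simp only [Amat, Matrix.of_apply, apply_ite C, map_one, map_zero]
    split_ifs <;> ring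
  rw [hA, ← detB n, ← AE n, Matrix.det_mul, detE, mul_one]
end

section
/- Let X be a finite poset with distinct elements v, v' and let S, S' be finite posets. Then the iterated insertions (X ←_v S) ←_{v'} S' and (X ←_{v'} S') ←_v S are isomorphic as posets. -/
/-- The order relation of the insertion `X ←_v S` of a poset `S` into `X`
at the element `v`, defined on the carrier `{x : X // x ≠ v} ⊕ S`. -/
def insRel {X S : Type*} (rX : X → X → Prop) (rS : S → S → Prop) (v : X) :
    ({x : X // x ≠ v} ⊕ S) → ({x : X // x ≠ v} ⊕ S) → Prop
  | Sum.inl x, Sum.inl y => rX x.val y.val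
  | Sum.inl x, Sum.inr _ => rX x.val v
  | Sum.inr _, Sum.inl y => rX v y.val
  | Sum.inr a, Sum.inr b => rS a b

theorem stmt_19 (X S S' : Type*) [Fintype X] [Fintype S] [Fintype S']
    [PartialOrder X] [PartialOrder S] [PartialOrder S']
    (v v' : X) (hvv' : v ≠ v') :
    -- first insert S at v, then S' at v' (viewed inside `X ←_v S`)
    let r1 := insRel ((· ≤ ·) : X → X → Prop) ((· ≤ ·) : S → S → Prop) v
    let w' : {x : X // x ≠ v} ⊕ S := Sum.inl ⟨v', fun h => hvv' h.symm⟩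
    let rA := insRel r1 ((· ≤ ·) : S' → S' → Prop) w'
    -- first insert S' at v', then S at v (viewed inside `X ←_{v'} S'`)
    let r2 := insRel ((· ≤ ·) : X → X → Prop) ((· ≤ ·) : S' → S' → Prop) v'
    let w : {x : X // x ≠ v'} ⊕ S' := Sum.inl ⟨v, hvv'⟩
    let rB := insRel r2 ((· ≤ ·) : S → S → Prop) w
    ∃ e : ({y : {x : X // x ≠ v} ⊕ S // y ≠ w'} ⊕ S') ≃
          ({y : {x : X // x ≠ v'} ⊕ S' // y ≠ w} ⊕ S),
      ∀ a b, rA a b ↔ rB (e a) (e b) := by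
  intro r1 w' rA r2 w rB
  refine ⟨{
    toFun := fun a => match a with
      | Sum.inl ⟨Sum.inl x, h⟩ =>
          Sum.inl ⟨Sum.inl ⟨x.val, fun hx => h (by simp [w', Subtype.ext_iff, hx])⟩,
            by simp [w, Subtype.ext_iff, x.2]⟩
      | Sum.inl ⟨Sum.inr s, _⟩ => Sum.inr s
      | Sum.inr s' => Sum.inl ⟨Sum.inr s', by simp [w]⟩
    invFun := fun b => match b with
      | Sum.inl ⟨Sum.inl x, h⟩ =>
          Sum.inl ⟨Sum.inl ⟨x.val, fun hx => h (by simp [w, Subtype.ext_iff, hx])⟩,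
            by simp [w', Subtype.ext_iff, x.2]⟩
      | Sum.inl ⟨Sum.inr s', _⟩ => Sum.inr s'
      | Sum.inr s => Sum.inl ⟨Sum.inr s, by simp [w']⟩
    left_inv := fun a => by
      rcases a with ⟨⟨x, hx⟩ | s, h⟩ | s' <;> rfl
    right_inv := fun b => by
      rcases b with ⟨⟨x, hx⟩ | s', h⟩ | s <;> rfl }, ?_⟩
  rintro (⟨⟨x, hx⟩ | s, ha⟩ | s') (⟨⟨y, hy⟩ | t, hb⟩ | t') <;>
    simp [rA, rB, r1, r2, insRel, w, w']
end
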